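/- Let ε > 0, τ > 0 and δ ∈ (0,1). Then e^{ετ}/(1 + e^{ετ}) ≥ 1 − δ if and only if τ ≥ (1/ε)·ln((1 − δ)/δ). Consequently, for the two-outcome exponential mechanism EM_count that outputs o ∈ {0,1} with probability proportional to exp(ε·τ·u'(qD, o)): (i) if qD = qDs, then Pr[output = 1] = e^{ετ}/(1 + e^{ετ}) ≥ 1 − δ whenever τ ≥ (1/ε)·ln((1 − δ)/δ); (ii) if qD ∉ (qDs − 2τ, qDs + 2τ), then Pr[output = 0] = e^{ετ}/(1 + e^{ετ}) ≥ 1 − δ whenever τ ≥ (1/ε)·ln((1 − δ)/δ). Hence the effectiveness threshold of EM_count at δ is at most (1/ε)·ln((1 − δ)/δ). -/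

import Mathlib

open scoped Classical

/-- The improved score `u'(x, 1)` of `EM_count` (value of the score function on
outcome `1`), with `l − τ = qDs − 2τ` and `r + τ = qDs + 2τ`. -/
noncomputable def emScore (τ qDs x : ℝ) : ℝ :=
  if x ≤ qDs - 2 * τ ∨ qDs + 2 * τ ≤ x then 0
  else if x ≤ qDs then (x - (qDs - 2 * τ)) / (2 * τ)
  else 1 - (x - qDs) / (2 * τ)

/-- Probability that the two-outcome exponential mechanism `EM_count`, which outputs
`o ∈ {0,1}` with probability proportional to `exp (ε·τ·u'(qD, o))`
(where `u'(x,1) = emScore τ qDs x` and `u'(x,0) = 1 − emScore τ qDs x`),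
returns outcome `o`. -/
noncomputable def emProb (ε τ qDs qD : ℝ) (o : Bool) : ℝ :=
  Real.exp (ε * τ * (if o then emScore τ qDs qD else 1 - emScore τ qDs qD)) /
    (Real.exp (ε * τ * emScore τ qDs qD) + Real.exp (ε * τ * (1 - emScore τ qDs qD)))

lemma em_iff (ε τ δ : ℝ) (hε : 0 < ε) (hδ0 : 0 < δ) (hδ1 : δ < 1) :
    Real.exp (ε * τ) / (1 + Real.exp (ε * τ)) ≥ 1 - δ ↔
      τ ≥ (1 / ε) * Real.log ((1 - δ) / δ) := by
  have ha : 0 < Real.exp (ε * τ) := Real.exp_pos _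
  have h1 : 0 < 1 + Real.exp (ε * τ) := by linarith
  have hr : 0 < (1 - δ) / δ := div_pos (by linarith) hδ0
  constructor
  · intro h
    rw [ge_iff_le, le_div_iff₀ h1] at h
    have hlog : Real.log ((1 - δ) / δ) ≤ ε * τ := by
      rw [← Real.log_exp (ε * τ)]
      apply Real.log_le_log hr
      rw [div_le_iff₀ hδ0]
      nlinarith
    rw [ge_iff_le, one_div, mul_comm, ← div_eq_mul_inv, div_le_iff₀ hε]
    linarith [hlog]
  · intro h
    rw [ge_iff_le, one_div, mul_comm, ← div_eq_mul_inv, div_le_iff₀ hε] at h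
    have hlog : (1 - δ) / δ ≤ Real.exp (ε * τ) := by
      rw [← Real.exp_log hr]
      exact Real.exp_le_exp.2 (by linarith)
    rw [div_le_iff₀ hδ0] at hlog
    rw [ge_iff_le, le_div_iff₀ h1]
    nlinarith

/-- Effectiveness of `EM_count`: `e^{ετ}/(1 + e^{ετ}) ≥ 1 − δ ↔ τ ≥ (1/ε)·ln((1−δ)/δ)`;
(i) if `qD = qDs` then `Pr[output = 1] = e^{ετ}/(1 + e^{ετ})`, which is `≥ 1 − δ`
whenever `τ ≥ (1/ε)·ln((1−δ)/δ)`;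
(ii) if `qD ∉ (qDs − 2τ, qDs + 2τ)` then `Pr[output = 0] = e^{ετ}/(1 + e^{ετ})`,
which is `≥ 1 − δ` whenever `τ ≥ (1/ε)·ln((1−δ)/δ)`.
Hence the effectiveness threshold of `EM_count` at `δ` is at most `(1/ε)·ln((1−δ)/δ)`. -/
theorem emcount_effectiveness (ε τ δ qD qDs : ℝ) (hε : 0 < ε) (hτ : 0 < τ)
    (hδ0 : 0 < δ) (hδ1 : δ < 1) :
    (Real.exp (ε * τ) / (1 + Real.exp (ε * τ)) ≥ 1 - δ ↔
      τ ≥ (1 / ε) * Real.log ((1 - δ) / δ)) ∧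
    (qD = qDs →
      emProb ε τ qDs qD true = Real.exp (ε * τ) / (1 + Real.exp (ε * τ)) ∧
      (τ ≥ (1 / ε) * Real.log ((1 - δ) / δ) → emProb ε τ qDs qD true ≥ 1 - δ)) ∧
    (qD ∉ Set.Ioo (qDs - 2 * τ) (qDs + 2 * τ) →
      emProb ε τ qDs qD false = Real.exp (ε * τ) / (1 + Real.exp (ε * τ)) ∧
      (τ ≥ (1 / ε) * Real.log ((1 - δ) / δ) → emProb ε τ qDs qD false ≥ 1 - δ)) := by
  have hiff := em_iff ε τ δ hε hδ0 hδ1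
  refine ⟨hiff, ?_, ?_⟩
  · intro hq
    have hscore : emScore τ qDs qD = 1 := by
      subst hq
      unfold emScore
      rw [if_neg, if_pos le_rfl]
      · field_simp; ring
      · push_neg; constructor <;> linarith
    have heq : emProb ε τ qDs qD true = Real.exp (ε * τ) / (1 + Real.exp (ε * τ)) := by
      unfold emProb
      rw [hscore]
      simp [add_comm]
    exact ⟨heq, fun h => heq ▸ hiff.2 h⟩
  · intro hq
    have hscore : emScore τ qDs qD = 0 := by
      unfold emScore
      rw [if_pos]
      simp only [Set.mem_Ioo, not_and_or, not_lt] at hq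
      rcases hq with h | h
      · left; linarith
      · right; linarith
    have heq : emProb ε τ qDs qD false = Real.exp (ε * τ) / (1 + Real.exp (ε * τ)) := by
      unfold emProb
      rw [hscore]
      simp
    exact ⟨heq, fun h => heq ▸ hiff.2 h⟩
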